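/- Let ξ⋆ ∈ {ξ⋆^A, ξ⋆^B}, let ω ∈ {τ, conj(τ)}, and let φ : ℝ² → ℂ be continuously differentiable, ξ⋆-quasiperiodic, and satisfy φ(Rx) = ω·φ(x) for all x ∈ ℝ². Then ∫_𝕃 conj(φ(x))·∇φ(x) dx = 0 as a vector in ℂ²; equivalently, ⟨φ, D_x φ⟩_{L²(𝕃)} = 0 where D_x = (1/i)∇. -/

import Mathlib

open MeasureTheory

/-- The Euclidean inner product on `ℝ²`. -/
def dot2 (x y : ℝ × ℝ) : ℝ := x.1 * y.1 + x.2 * y.2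

/-- `f` is `ξ`-quasiperiodic with respect to the lattice `ℤv₁ + ℤv₂`. -/
def Quasiperiodic (v₁ v₂ ξ : ℝ × ℝ) (f : ℝ × ℝ → ℂ) : Prop :=
  ∀ (x : ℝ × ℝ) (m n : ℤ),
    f (x + ((m : ℝ) • v₁ + (n : ℝ) • v₂)) =
      Complex.exp (Complex.I * (dot2 ξ ((m : ℝ) • v₁ + (n : ℝ) • v₂) : ℂ)) * f x

/-- The fundamental cell `𝕃 = {s₁v₁ + s₂v₂ : s₁, s₂ ∈ [0,1)}`. -/
def cell (v₁ v₂ : ℝ × ℝ) : Set (ℝ × ℝ) :=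
  {x | ∃ s₁ s₂ : ℝ, s₁ ∈ Set.Ico (0 : ℝ) 1 ∧ s₂ ∈ Set.Ico (0 : ℝ) 1 ∧
    x = s₁ • v₁ + s₂ • v₂}

/-- Generator `v₁ = a(√3, 1)` of the equilateral lattice. -/
noncomputable def hex1 (a : ℝ) : ℝ × ℝ := (Real.sqrt 3 * a, a)

/-- Generator `v₂ = a(√3, −1)` of the equilateral lattice. -/
noncomputable def hex2 (a : ℝ) : ℝ × ℝ := (Real.sqrt 3 * a, -a)

/-- The rotation `R` by `2π/3`. -/
noncomputable def Rot (x : ℝ × ℝ) : ℝ × ℝ :=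
  ((-x.1 + Real.sqrt 3 * x.2) / 2, (-(Real.sqrt 3) * x.1 - x.2) / 2)

/-- `τ = e^{2πi/3}`. -/
noncomputable def tau3 : ℂ := Complex.exp (2 * Real.pi * Complex.I / 3)

/-! ### Auxiliary material -/

section Aux

lemma sqrt3_pos : 0 < Real.sqrt 3 := Real.sqrt_pos.2 (by norm_num)

lemma sqrt3_sq : Real.sqrt 3 * Real.sqrt 3 = 3 := Real.mul_self_sqrt (by norm_num)

lemma Rot_add (x y : ℝ × ℝ) : Rot (x + y) = Rot x + Rot y := by
  simp [Rot, Prod.ext_iff]; constructor <;> ring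

lemma Rot_smul (c : ℝ) (x : ℝ × ℝ) : Rot (c • x) = c • Rot x := by
  simp [Rot, Prod.ext_iff, Prod.smul_def]; constructor <;> ring

lemma Rot3 (x : ℝ × ℝ) : Rot (Rot (Rot x)) = x := by
  have h := sqrt3_sq
  simp only [Rot, Prod.ext_iff]
  constructor <;> field_simp
  · linear_combination (3*x.1 - Real.sqrt 3*x.2) * h
  · linear_combination (Real.sqrt 3*x.1 + 3*x.2) * h

lemma RotSum (e : ℝ × ℝ) : e + Rot e + Rot (Rot e) = 0 := by
  have h := sqrt3_sq
  simp only [Rot, Prod.ext_iff, Prod.fst_add, Prod.snd_add, Prod.fst_zero, Prod.snd_zero]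
  constructor <;> field_simp
  · linear_combination (-e.1) * h
  · linear_combination (-e.2) * h

noncomputable def RotL : (ℝ × ℝ) →ₗ[ℝ] (ℝ × ℝ) := ⟨⟨Rot, Rot_add⟩, Rot_smul⟩

lemma RotL_det : LinearMap.det RotL = 1 := by
  have h := sqrt3_sq
  rw [← LinearMap.det_toMatrix (Module.Basis.finTwoProd ℝ), Matrix.det_fin_two]
  simp [LinearMap.toMatrix_apply, RotL, Rot, Module.Basis.finTwoProd]
  linear_combination (1/4 : ℝ) * h

lemma Rot_continuous : Continuous Rot := by
  unfold Rot; fun_prop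

noncomputable def RotCL : (ℝ × ℝ) →L[ℝ] (ℝ × ℝ) :=
  { toLinearMap := RotL, cont := Rot_continuous }

noncomputable def RotLE : (ℝ × ℝ) ≃ₗ[ℝ] (ℝ × ℝ) :=
  LinearEquiv.ofLinear RotL (RotL ∘ₗ RotL)
    (LinearMap.ext fun x => Rot3 x) (LinearMap.ext fun x => Rot3 x)

lemma Rot_measurePreserving : MeasurePreserving Rot volume volume := by
  refine ⟨Rot_continuous.measurable, ?_⟩
  have := Measure.map_linearMap_addHaar_eq_smul_addHaar (volume : Measure (ℝ × ℝ))
    (f := RotL) (by rw [RotL_det]; norm_num)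
  exact (by simpa [RotL_det] using this : Measure.map (⇑RotL) volume = volume)

noncomputable def RotME : (ℝ × ℝ) ≃ᵐ (ℝ × ℝ) :=
  Homeomorph.toMeasurableEquiv
    { toEquiv := RotLE.toEquiv
      continuous_toFun := Rot_continuous
      continuous_invFun := Rot_continuous.comp Rot_continuous }

lemma RotME_coe : (RotME : (ℝ × ℝ) → (ℝ × ℝ)) = Rot := rfl

noncomputable def hexEquiv (a : ℝ) (ha : 0 < a) : (ℝ × ℝ) ≃ₗ[ℝ] (ℝ × ℝ) :=
  LinearEquiv.ofLinear
    ⟨⟨fun p => p.1 • hex1 a + p.2 • hex2 a, by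
        intro x y; simp [hex1, hex2, Prod.ext_iff]; constructor <;> ring⟩, by
        intro c x; simp [hex1, hex2, Prod.ext_iff, Prod.smul_def]; constructor <;> ring⟩
    ⟨⟨fun x => ((x.1 / (Real.sqrt 3 * a) + x.2 / a) / 2, (x.1 / (Real.sqrt 3 * a) - x.2 / a) / 2),
      by intro x y; simp [Prod.ext_iff]; constructor <;> ring⟩, by
        intro c x; simp [Prod.ext_iff, Prod.smul_def]; constructor <;> ring⟩
    (LinearMap.ext fun x => by
      have h3 := sqrt3_sq
      have ha' := ha.ne'
      have h3' := sqrt3_pos.ne'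
      simp only [LinearMap.coe_comp, LinearMap.coe_mk, AddHom.coe_mk, Function.comp_apply,
        LinearMap.id_coe, id_eq, hex1, hex2, Prod.smul_def, smul_eq_mul, Prod.mk_add_mk,
        Prod.ext_iff]
      constructor <;> field_simp <;> nlinarith [h3])
    (LinearMap.ext fun x => by
      have h3 := sqrt3_sq
      have ha' := ha.ne'
      have h3' := sqrt3_pos.ne'
      simp only [LinearMap.coe_comp, LinearMap.coe_mk, AddHom.coe_mk, Function.comp_apply,
        LinearMap.id_coe, id_eq, hex1, hex2, Prod.smul_def, smul_eq_mul, Prod.mk_add_mk,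
        Prod.ext_iff]
      constructor <;> field_simp <;> nlinarith [h3])

lemma hexEquiv_apply (a : ℝ) (ha : 0 < a) (p : ℝ × ℝ) :
    hexEquiv a ha p = p.1 • hex1 a + p.2 • hex2 a := rfl

noncomputable def hexBasis (a : ℝ) (ha : 0 < a) : Module.Basis (Fin 2) ℝ (ℝ × ℝ) :=
  (Module.Basis.finTwoProd ℝ).map (hexEquiv a ha)

lemma hexBasis_zero (a : ℝ) (ha : 0 < a) : hexBasis a ha 0 = hex1 a := by
  simp [hexBasis, Module.Basis.map_apply, Module.Basis.finTwoProd, hexEquiv_apply]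

lemma hexBasis_one (a : ℝ) (ha : 0 < a) : hexBasis a ha 1 = hex2 a := by
  simp [hexBasis, Module.Basis.map_apply, Module.Basis.finTwoProd, hexEquiv_apply]

lemma cell_eq (a : ℝ) (ha : 0 < a) :
    cell (hex1 a) (hex2 a) = ZSpan.fundamentalDomain (hexBasis a ha) := by
  ext x
  have hrepr : ∀ y : ℝ × ℝ, (hexBasis a ha).repr y =
      (Module.Basis.finTwoProd ℝ).repr ((hexEquiv a ha).symm y) := by
    intro y; simp [hexBasis, Module.Basis.map_repr]
  constructor
  · rintro ⟨s₁, s₂, hs₁, hs₂, rfl⟩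
    intro i
    have : (hexEquiv a ha).symm (s₁ • hex1 a + s₂ • hex2 a) = (s₁, s₂) := by
      rw [show s₁ • hex1 a + s₂ • hex2 a = hexEquiv a ha (s₁, s₂) from rfl,
        LinearEquiv.symm_apply_apply]
    rw [hrepr, this]
    fin_cases i <;> simpa [Module.Basis.finTwoProd]
  · intro hx
    refine ⟨((hexEquiv a ha).symm x).1, ((hexEquiv a ha).symm x).2, ?_, ?_, ?_⟩
    · simpa [hrepr, Module.Basis.finTwoProd] using hx 0
    · simpa [hrepr, Module.Basis.finTwoProd] using hx 1
    · conv_lhs => rw [← (hexEquiv a ha).apply_symm_apply x]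
      rw [hexEquiv_apply]

lemma range_hexBasis (a : ℝ) (ha : 0 < a) :
    Set.range (hexBasis a ha) = {hex1 a, hex2 a} := by
  ext x
  simp only [Set.mem_range, Set.mem_insert_iff, Set.mem_singleton_iff]
  constructor
  · rintro ⟨i, rfl⟩; fin_cases i
    · left; exact hexBasis_zero a ha
    · right; exact hexBasis_one a ha
  · rintro (rfl | rfl)
    · exact ⟨0, hexBasis_zero a ha⟩
    · exact ⟨1, hexBasis_one a ha⟩

lemma Rot_hex1 (a : ℝ) : Rot (hex1 a) = hex2 a - hex1 a := by
  have h3 := sqrt3_sq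
  simp only [Rot, hex1, hex2, Prod.ext_iff, Prod.fst_sub, Prod.snd_sub]
  constructor
  · ring
  · field_simp
    first
    | linear_combination a * h3
    | linear_combination (-a) * h3
    | linear_combination (2*a) * h3
    | linear_combination (-2*a) * h3

lemma Rot_hex2 (a : ℝ) : Rot (hex2 a) = -hex1 a := by
  have h3 := sqrt3_sq
  simp only [Rot, hex1, hex2, Prod.ext_iff, Prod.fst_neg, Prod.snd_neg]
  constructor
  · ring
  · field_simp
    first
    | linear_combination a * h3
    | linear_combination (-a) * h3
    | linear_combination (2*a) * h3
    | linear_combination (-2*a) * h3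

noncomputable def hexLat (a : ℝ) (ha : 0 < a) : Submodule ℤ (ℝ × ℝ) :=
  Submodule.span ℤ (Set.range (hexBasis a ha))

lemma mem_hexLat (a : ℝ) (ha : 0 < a) (w : ℝ × ℝ) :
    w ∈ hexLat a ha ↔ ∃ m n : ℤ, (m : ℝ) • hex1 a + (n : ℝ) • hex2 a = w := by
  rw [hexLat, range_hexBasis, Submodule.mem_span_pair]
  constructor
  · rintro ⟨m, n, h⟩
    exact ⟨m, n, by rw [Int.cast_smul_eq_zsmul, Int.cast_smul_eq_zsmul]; exact h⟩
  · rintro ⟨m, n, h⟩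
    exact ⟨m, n, by rw [← Int.cast_smul_eq_zsmul ℝ m, ← Int.cast_smul_eq_zsmul ℝ n]; exact h⟩

lemma Rot_mem_hexLat (a : ℝ) (ha : 0 < a) (w : ℝ × ℝ) (hw : w ∈ hexLat a ha) :
    Rot w ∈ hexLat a ha := by
  rw [mem_hexLat] at hw ⊢
  obtain ⟨m, n, rfl⟩ := hw
  refine ⟨-m - n, m, ?_⟩
  rw [Rot_add, Rot_smul, Rot_smul, Rot_hex1, Rot_hex2]
  push_cast
  simp only [smul_sub, smul_neg, Prod.ext_iff]
  simp [Prod.smul_def, hex1, hex2]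
  constructor <;> ring

noncomputable def hexGrp (a : ℝ) (ha : 0 < a) : AddSubgroup (ℝ × ℝ) :=
  (hexLat a ha).toAddSubgroup

instance hexGrp_countable (a : ℝ) (ha : 0 < a) : Countable (hexGrp a ha) := by
  have hsurj : Function.Surjective
      (fun p : ℤ × ℤ => (⟨(p.1 : ℝ) • hex1 a + (p.2 : ℝ) • hex2 a,
        (mem_hexLat a ha _).2 ⟨p.1, p.2, rfl⟩⟩ : hexGrp a ha)) := by
    rintro ⟨w, hw⟩
    obtain ⟨m, n, h⟩ := (mem_hexLat a ha w).1 hw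
    exact ⟨(m, n), Subtype.ext h⟩
  exact hsurj.countable

lemma hexFD (a : ℝ) (ha : 0 < a) :
    IsAddFundamentalDomain (hexGrp a ha) (cell (hex1 a) (hex2 a)) volume := by
  rw [cell_eq a ha]
  exact ZSpan.isAddFundamentalDomain' (hexBasis a ha) volume

noncomputable def rotGrpEquiv (a : ℝ) (ha : 0 < a) : hexGrp a ha → hexGrp a ha :=
  fun g => ⟨Rot (Rot (g : ℝ × ℝ)),
    Rot_mem_hexLat a ha _ (Rot_mem_hexLat a ha _ g.2)⟩

lemma rotGrpEquiv_bij (a : ℝ) (ha : 0 < a) : Function.Bijective (rotGrpEquiv a ha) := by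
  constructor
  · intro g h hg
    apply Subtype.ext
    have := congrArg (fun z : hexGrp a ha => Rot (z : ℝ × ℝ)) hg
    simpa [rotGrpEquiv, Rot3] using this
  · intro g
    refine ⟨⟨Rot (g : ℝ × ℝ), Rot_mem_hexLat a ha _ g.2⟩, ?_⟩
    apply Subtype.ext
    simp [rotGrpEquiv, Rot3]

lemma hexFD' (a : ℝ) (ha : 0 < a) :
    IsAddFundamentalDomain (hexGrp a ha) (Rot ⁻¹' cell (hex1 a) (hex2 a)) volume := by
  refine (hexFD a ha).preimage_of_equiv
    Rot_measurePreserving.quasiMeasurePreserving (rotGrpEquiv_bij a ha) ?_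
  intro g x
  show Rot ((Rot (Rot (g : ℝ × ℝ))) + x) = (g : ℝ × ℝ) + Rot x
  rw [Rot_add, Rot3]

lemma omega_unimodular (ω : ℂ) (hω : ω = tau3 ∨ ω = (starRingEnd ℂ) tau3) :
    (starRingEnd ℂ) ω * ω = 1 := by
  have key : (starRingEnd ℂ) tau3 * tau3 = 1 := by
    rw [tau3, ← Complex.exp_conj, ← Complex.exp_add]
    have : (starRingEnd ℂ) (2 * Real.pi * Complex.I / 3) = -(2 * Real.pi * Complex.I / 3) := by
      simp only [map_div₀, map_mul, Complex.conj_I, Complex.conj_ofReal, map_ofNat]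
      ring
    rw [this, neg_add_cancel, Complex.exp_zero]
  rcases hω with rfl | rfl
  · exact key
  · rw [Complex.conj_conj, mul_comm]
    exact key

lemma qp_unimodular (r : ℝ) :
    (starRingEnd ℂ) (Complex.exp (Complex.I * r)) * Complex.exp (Complex.I * r) = 1 := by
  rw [← Complex.exp_conj, ← Complex.exp_add]
  have : (starRingEnd ℂ) (Complex.I * r) = -(Complex.I * r) := by
    simp [Complex.conj_I]
  rw [this, neg_add_cancel, Complex.exp_zero]

lemma fderiv_rot (φ : ℝ × ℝ → ℂ) (hφ : ContDiff ℝ 1 φ) (ω : ℂ)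
    (hrot : ∀ x, φ (Rot x) = ω * φ x) (x e : ℝ × ℝ) :
    fderiv ℝ φ (Rot x) (Rot e) = ω * fderiv ℝ φ x e := by
  have hd : ∀ y, HasFDerivAt φ (fderiv ℝ φ y) y :=
    fun y => (hφ.differentiable one_ne_zero y).hasFDerivAt
  have h1 : HasFDerivAt (fun y => φ (Rot y)) ((fderiv ℝ φ (Rot x)).comp RotCL) x :=
    (hd (Rot x)).comp x (RotCL.hasFDerivAt)
  have h2 : HasFDerivAt (fun y => φ (Rot y)) (ω • fderiv ℝ φ x) x := by
    have := (hd x).const_mul ω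
    simpa [hrot] using this
  have := h1.unique h2
  calc fderiv ℝ φ (Rot x) (Rot e) = ((fderiv ℝ φ (Rot x)).comp RotCL) e := rfl
    _ = (ω • fderiv ℝ φ x) e := by rw [this]
    _ = ω * fderiv ℝ φ x e := rfl

lemma fderiv_translate (φ : ℝ × ℝ → ℂ) (hφ : ContDiff ℝ 1 φ) (c : ℂ) (w : ℝ × ℝ)
    (hc : ∀ y, φ (y + w) = c * φ y) (x e : ℝ × ℝ) :
    fderiv ℝ φ (x + w) e = c * fderiv ℝ φ x e := by
  have hd : ∀ y, HasFDerivAt φ (fderiv ℝ φ y) y :=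
    fun y => (hφ.differentiable one_ne_zero y).hasFDerivAt
  have h1 : HasFDerivAt (fun y => φ (y + w)) (fderiv ℝ φ (x + w)) x := by
    have := (hd (x + w)).comp x ((hasFDerivAt_id x).add_const w)
    exact this
  have h2 : HasFDerivAt (fun y => φ (y + w)) (c • fderiv ℝ φ x) x := by
    have := (hd x).const_mul c
    simpa [hc] using this
  have := h1.unique h2
  calc fderiv ℝ φ (x + w) e = (fderiv ℝ φ (x + w)) e := rfl
    _ = (c • fderiv ℝ φ x) e := by rw [this]
    _ = c * fderiv ℝ φ x e := rfl

end Aux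

/-- First part of Lemma 1i of the paper: `⟨φ, D_x φ⟩ = 0` for a rotation eigenfunction at a
Dirac momentum. -/
theorem stmt9 (a : ℝ) (ha : 0 < a) (hdet : 2 * Real.sqrt 3 * a ^ 2 = 1)
    (k₁ k₂ : ℝ × ℝ)
    (hk11 : dot2 k₁ (hex1 a) = 1) (hk12 : dot2 k₁ (hex2 a) = 0)
    (hk21 : dot2 k₂ (hex1 a) = 0) (hk22 : dot2 k₂ (hex2 a) = 1)
    (ξ : ℝ × ℝ)
    (hξ : ξ = (2 * Real.pi / 3) • ((2 : ℝ) • k₁ + k₂) ∨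
          ξ = (2 * Real.pi / 3) • (k₁ + (2 : ℝ) • k₂))
    (ω : ℂ) (hω : ω = tau3 ∨ ω = (starRingEnd ℂ) tau3)
    (φ : ℝ × ℝ → ℂ) (hφC1 : ContDiff ℝ 1 φ)
    (hφqp : Quasiperiodic (hex1 a) (hex2 a) ξ φ)
    (hφrot : ∀ x, φ (Rot x) = ω * φ x) :
    (∫ x in cell (hex1 a) (hex2 a),
        (starRingEnd ℂ) (φ x) * fderiv ℝ φ x ((1 : ℝ), (0 : ℝ))) = 0 ∧
    (∫ x in cell (hex1 a) (hex2 a),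
        (starRingEnd ℂ) (φ x) * fderiv ℝ φ x ((0 : ℝ), (1 : ℝ))) = 0 := by
  set G : (ℝ × ℝ) → (ℝ × ℝ) → ℂ :=
    fun e x => (starRingEnd ℂ) (φ x) * fderiv ℝ φ x e with hG
  -- rotation covariance of the integrand
  have hGrot : ∀ e x, G (Rot e) (Rot x) = G e x := by
    intro e x
    simp only [hG]
    rw [hφrot x, fderiv_rot φ hφC1 ω hφrot x e, map_mul]
    calc (starRingEnd ℂ) ω * (starRingEnd ℂ) (φ x) * (ω * fderiv ℝ φ x e)
        = ((starRingEnd ℂ) ω * ω) * ((starRingEnd ℂ) (φ x) * fderiv ℝ φ x e) := by ring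
      _ = (starRingEnd ℂ) (φ x) * fderiv ℝ φ x e := by
          rw [omega_unimodular ω hω, one_mul]
  -- lattice periodicity of the integrand
  have hGper : ∀ (e : ℝ × ℝ) (g : hexGrp a ha) (x : ℝ × ℝ), G e ((g : ℝ × ℝ) + x) = G e x := by
    intro e g x
    obtain ⟨m, n, hw⟩ := (mem_hexLat a ha _).1 g.2
    set w : ℝ × ℝ := (m : ℝ) • hex1 a + (n : ℝ) • hex2 a with hwdef
    set c : ℂ := Complex.exp (Complex.I * (dot2 ξ w : ℂ)) with hcdef
    have hc : ∀ y, φ (y + w) = c * φ y := fun y => hφqp y m n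
    have hgx : (g : ℝ × ℝ) + x = x + w := by rw [← hw]; abel
    rw [hgx]
    simp only [hG]
    rw [hc x, fderiv_translate φ hφC1 c w hc x e, map_mul]
    calc (starRingEnd ℂ) c * (starRingEnd ℂ) (φ x) * (c * fderiv ℝ φ x e)
        = ((starRingEnd ℂ) c * c) * ((starRingEnd ℂ) (φ x) * fderiv ℝ φ x e) := by ring
      _ = (starRingEnd ℂ) (φ x) * fderiv ℝ φ x e := by
          rw [hcdef, qp_unimodular (dot2 ξ w), one_mul]
  -- integrability
  have hGcont : ∀ e, Continuous (G e) := by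
    intro e
    exact (Complex.continuous_conj.comp (hφC1.continuous)).mul
      ((hφC1.continuous_fderiv one_ne_zero).clm_apply continuous_const)
  have hGint : ∀ e, IntegrableOn (G e) (cell (hex1 a) (hex2 a)) volume := by
    intro e
    have hK : IsCompact ((fun p : ℝ × ℝ => p.1 • hex1 a + p.2 • hex2 a) ''
        (Set.Icc (0:ℝ) 1 ×ˢ Set.Icc (0:ℝ) 1)) := by
      apply (isCompact_Icc.prod isCompact_Icc).image
      fun_prop
    have hsub : cell (hex1 a) (hex2 a) ⊆ (fun p : ℝ × ℝ => p.1 • hex1 a + p.2 • hex2 a) ''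
        (Set.Icc (0:ℝ) 1 ×ˢ Set.Icc (0:ℝ) 1) := by
      rintro x ⟨s₁, s₂, hs₁, hs₂, rfl⟩
      exact ⟨(s₁, s₂), ⟨⟨hs₁.1, hs₁.2.le⟩, ⟨hs₂.1, hs₂.2.le⟩⟩, rfl⟩
    exact (((hGcont e).continuousOn).integrableOn_compact hK).mono_set hsub
  -- rotation invariance of the integral
  have key : ∀ e, (∫ x in cell (hex1 a) (hex2 a), G (Rot e) x) =
      ∫ x in cell (hex1 a) (hex2 a), G e x := by
    intro e
    have h1 := Rot_measurePreserving.setIntegral_preimage_emb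
      RotME.measurableEmbedding (G (Rot e)) (cell (hex1 a) (hex2 a))
    rw [← h1]
    have h2 : (fun x => G (Rot e) (Rot x)) = G e := funext fun x => hGrot e x
    rw [h2]
    exact (hexFD' a ha).setIntegral_eq (hexFD a ha) (fun g x => hGper e g x)
  -- pointwise sum is zero
  have hsum : ∀ e x, G e x + G (Rot e) x + G (Rot (Rot e)) x = 0 := by
    intro e x
    have hlin : fderiv ℝ φ x e + fderiv ℝ φ x (Rot e) + fderiv ℝ φ x (Rot (Rot e)) = 0 := by
      rw [← ContinuousLinearMap.map_add, ← ContinuousLinearMap.map_add, RotSum e,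
        ContinuousLinearMap.map_zero]
    simp only [hG]
    calc (starRingEnd ℂ) (φ x) * fderiv ℝ φ x e + (starRingEnd ℂ) (φ x) * fderiv ℝ φ x (Rot e)
          + (starRingEnd ℂ) (φ x) * fderiv ℝ φ x (Rot (Rot e))
        = (starRingEnd ℂ) (φ x) * (fderiv ℝ φ x e + fderiv ℝ φ x (Rot e)
            + fderiv ℝ φ x (Rot (Rot e))) := by ring
      _ = 0 := by rw [hlin, mul_zero]
  -- main conclusion
  have main : ∀ e, (∫ x in cell (hex1 a) (hex2 a), G e x) = 0 := by
    intro e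
    have hzero : (∫ x in cell (hex1 a) (hex2 a),
        (G e x + G (Rot e) x + G (Rot (Rot e)) x)) = 0 := by
      have : (fun x => G e x + G (Rot e) x + G (Rot (Rot e)) x) = fun _ => (0 : ℂ) :=
        funext fun x => hsum e x
      rw [this, integral_zero]
    have hI1 : IntegrableOn (fun x => G e x + G (Rot e) x) (cell (hex1 a) (hex2 a)) volume :=
      (hGint e).add (hGint (Rot e))
    rw [integral_add hI1 (hGint (Rot (Rot e))),
      integral_add (hGint e) (hGint (Rot e))] at hzero
    rw [key e, key (Rot e), key e] at hzero
    have h3 : (3 : ℂ) * (∫ x in cell (hex1 a) (hex2 a), G e x) = 0 := by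
      linear_combination hzero
    have := mul_eq_zero.1 h3
    simpa using this
  exact ⟨main ((1 : ℝ), (0 : ℝ)), main ((0 : ℝ), (1 : ℝ))⟩
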